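/- arXiv:2402.17765 — 3 statements merged into one kernel-verified Lean document; each statement's English description precedes it below -/
import Mathlib

section
/- Let B be an invertible 3×3 real matrix all of whose inverse's entries are nonnegative, let t ∈ ℝ³, and define the affine map G(x) = Bx + t. Then: (i) for every vector w ∈ ℝ³ with strictly positive coordinates there exists c > 0 such that G(0) + c·w ∈ G(T₀); (ii) for every 2-dimensional linear subspace Y of ℝ³ whose normal vector has strictly positive coordinates, the orthogonal projections onto Y satisfy proj_Y(G(W)) = proj_Y(G(T₀)). -/
open Matrix MeasureTheory Filter
open scoped ENNReal

noncomputable section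

abbrev E3 : Type := EuclideanSpace ℝ (Fin 3)
abbrev Mat3 : Type := Matrix (Fin 3) (Fin 3) ℝ

/-- The action of a matrix on Euclidean 3-space. -/
noncomputable def matApply (A : Mat3) (x : E3) : E3 := Matrix.toEuclideanCLM (𝕜 := ℝ) A x

/-- The largest singular value `α₁(A) = ‖A‖` (Euclidean operator norm). -/
noncomputable def sv1 (A : Mat3) : ℝ := ‖Matrix.toEuclideanCLM (𝕜 := ℝ) A‖

/-- The smallest singular value `α₃(A) = ‖A⁻¹‖⁻¹`. -/
noncomputable def sv3 (A : Mat3) : ℝ := (‖Matrix.toEuclideanCLM (𝕜 := ℝ) A⁻¹‖)⁻¹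

/-- The middle singular value `α₂(A) = |det A| / (α₁(A) α₃(A))`. -/
noncomputable def sv2 (A : Mat3) : ℝ := |A.det| / (sv1 A * sv3 A)

/-- Falconer's singular value function `φ^s(A)`. -/
noncomputable def svf (s : ℝ) (A : Mat3) : ℝ :=
  if s ≤ 1 then (sv1 A) ^ s
  else if s ≤ 2 then sv1 A * (sv2 A) ^ (s - 1)
  else if s ≤ 3 then sv1 A * sv2 A * (sv3 A) ^ (s - 2)
  else (sv1 A * sv2 A * sv3 A) ^ (s / 3)

/-- The three matrices `C₁, C₂, C₃` (with 0-based indexing). -/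
def Cmat (p : ℝ) : Fin 3 → Mat3 :=
  ![!![1 - 2*p, -p, -p; 0, p, 0; 0, 0, p],
    !![p, 0, 0; -p, 1 - 2*p, -p; 0, 0, p],
    !![p, 0, 0; 0, p, 0; -p, -p, 1 - 2*p]]

/-- The product `C_w = C_{j₁} ⋯ C_{jₙ}` along a word `w = (j₁, …, jₙ)`. -/
noncomputable def Cword (p : ℝ) {n : ℕ} (w : Fin n → Fin 3) : Mat3 :=
  ((List.ofFn w).map (Cmat p)).prod

/-- standard basis vectors of `E3` -/
noncomputable def eVec (i : Fin 3) : E3 := EuclideanSpace.single i 1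

/-- The affine map `G_i(x) = C_i x + 2p·e_i`. -/
noncomputable def Gmap (p : ℝ) (i : Fin 3) (x : E3) : E3 :=
  matApply (Cmat p i) x + (2 * p) • eVec i

/-- The composition `G_w = G_{j₁} ∘ ⋯ ∘ G_{jₙ}` along a word `w = (j₁, …, jₙ)`. -/
noncomputable def Gword (p : ℝ) {n : ℕ} (w : Fin n → Fin 3) : E3 → E3 :=
  ((List.ofFn w).map (Gmap p)).foldr (· ∘ ·) id

/-- Summability of the double series `Σ_{n=1}^∞ Σ_{w ∈ {1,2,3}ⁿ} φ^s(C_w)`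
(all terms are nonnegative, so summability is equivalent to finiteness of the sum). -/
def seriesSummable (p s : ℝ) : Prop :=
  Summable (fun x : Σ n : ℕ, (Fin (n+1) → Fin 3) => svf s (Cword p x.2))

/-- The affinity dimension `s₀ = inf{s > 0 : Σ_n Σ_w φ^s(C_w) < ∞}`. -/
noncomputable def s0 (p : ℝ) : ℝ := sInf {s : ℝ | 0 < s ∧ seriesSummable p s}

/-- The minimal number of balls of radius `δ` needed to cover `A`. -/
noncomputable def coverNum (A : Set E3) (δ : ℝ) : ℕ :=
  sInf {n : ℕ | ∃ t : Finset E3, t.card = n ∧ A ⊆ ⋃ x ∈ t, Metric.ball x δ}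

/-- The upper box-counting dimension `limsup_{δ→0⁺} log N_δ(A) / (−log δ)`. -/
noncomputable def upperBoxDim (A : Set E3) : ℝ :=
  Filter.limsup (fun δ : ℝ => Real.log (coverNum A δ) / (-Real.log δ))
    (nhdsWithin 0 (Set.Ioi 0))

/-- The vector `(1,1,1)`. -/
noncomputable def onesVec : E3 := (WithLp.equiv 2 (Fin 3 → ℝ)).symm ![1, 1, 1]

/-- Orthogonal projection of `ℝ³` onto the plane `V = {x : x₁ + x₂ + x₃ = 0}`. -/
noncomputable def projV (x : E3) : E3 := x - (((x 0) + (x 1) + (x 2)) / 3) • onesVec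

/-- The vector `(a,b,c)` in `E3`. -/
noncomputable def vec3 (a b c : ℝ) : E3 := (WithLp.equiv 2 (Fin 3 → ℝ)).symm ![a, b, c]

/-- The triangle `T₀ = conv{e₁, e₂, e₃}`. -/
noncomputable def T0set : Set E3 := convexHull ℝ {eVec 0, eVec 1, eVec 2}

/-- The standard tetrahedron `W = conv{0, e₁, e₂, e₃}`. -/
noncomputable def Wset : Set E3 := convexHull ℝ {0, eVec 0, eVec 1, eVec 2}

/-- The triangle `T_ε = conv{(1−2ε,ε,ε), (ε,1−2ε,ε), (ε,ε,1−2ε)}`. -/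
noncomputable def Ttri (ε : ℝ) : Set E3 :=
  convexHull ℝ {vec3 (1 - 2*ε) ε ε, vec3 ε (1 - 2*ε) ε, vec3 ε ε (1 - 2*ε)}

lemma matApply_apply (B : Mat3) (x : E3) (i : Fin 3) :
    matApply B x i = ∑ j, B i j * x j := by
  change Matrix.toLin' B (WithLp.equiv 2 _ x) i = _
  simp [Matrix.toLin'_apply, Matrix.mulVec, dotProduct]

lemma matApply_zero (B : Mat3) : matApply B 0 = 0 := by
  unfold matApply; rw [map_zero]

lemma matApply_smul (B : Mat3) (c : ℝ) (x : E3) :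
    matApply B (c • x) = c • matApply B x := by
  unfold matApply; rw [_root_.map_smul]

lemma matApply_inv_right (B : Mat3) (hB : IsUnit B) (w : E3) :
    matApply B (matApply B⁻¹ w) = w := by
  have hd : IsUnit B.det := (Matrix.isUnit_iff_isUnit_det B).mp hB
  have h1 : B * B⁻¹ = 1 := Matrix.mul_nonsing_inv B hd
  have h2 : matApply B (matApply B⁻¹ w) =
      (Matrix.toEuclideanCLM (𝕜 := ℝ) B * Matrix.toEuclideanCLM (𝕜 := ℝ) B⁻¹) w := rfl
  rw [h2, ← _root_.map_mul, h1, _root_.map_one, ContinuousLinearMap.one_apply]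

lemma sum_smul_eVec (y : E3) : ∑ i, y i • eVec i = y := by
  rw [Fin.sum_univ_three]
  ext j
  fin_cases j <;>
    simp [eVec, EuclideanSpace.single_apply, PiLp.add_apply, PiLp.smul_apply]

lemma mem_T0set {y : E3} (h0 : ∀ i, 0 ≤ y i) (h1 : ∑ i, y i = 1) : y ∈ T0set := by
  have hy : Finset.univ.centerMass (fun i => y i) eVec = y := by
    rw [Finset.centerMass, h1, inv_one, one_smul, sum_smul_eVec]
  rw [← hy]
  exact Finset.centerMass_mem_convexHull _ (fun i _ => h0 i) (by rw [h1]; norm_num)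
    (fun i _ => by fin_cases i <;> simp)

lemma Wset_subset : Wset ⊆ {x : E3 | (∀ i, 0 ≤ x i) ∧ ∑ i, x i ≤ 1} := by
  apply convexHull_min
  · intro x hx
    rcases hx with rfl | rfl | rfl | rfl <;>
      refine ⟨fun i => by fin_cases i <;>
        simp [eVec, EuclideanSpace.single_apply], ?_⟩ <;>
      simp [Fin.sum_univ_three, eVec, EuclideanSpace.single_apply]
  · intro x hx y hy a b ha hb hab
    refine ⟨fun i => ?_, ?_⟩
    · have : (a • x + b • y) i = a * x i + b * y i := by
        simp [PiLp.add_apply, PiLp.smul_apply]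
      rw [this]
      exact add_nonneg (mul_nonneg ha (hx.1 i)) (mul_nonneg hb (hy.1 i))
    · have : ∑ i, (a • x + b • y) i = a * ∑ i, x i + b * ∑ i, y i := by
        simp [PiLp.add_apply, PiLp.smul_apply, Finset.sum_add_distrib, Finset.mul_sum]
      rw [this]
      calc a * ∑ i, x i + b * ∑ i, y i ≤ a * 1 + b * 1 := by
            gcongr; exacts [hx.2, hy.2]
        _ = 1 := by rw [mul_one, mul_one, hab]

lemma v_facts (B : Mat3) (hB : IsUnit B) (hBinv : ∀ i j, 0 ≤ B⁻¹ i j) (w : E3)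
    (hw : ∀ i, 0 < w i) :
    (∀ i, 0 ≤ matApply B⁻¹ w i) ∧ 0 < ∑ i, matApply B⁻¹ w i := by
  set v := matApply B⁻¹ w with hv
  have hv0 : ∀ i, 0 ≤ v i := fun i => by
    rw [hv, matApply_apply]
    exact Finset.sum_nonneg fun j _ => mul_nonneg (hBinv i j) (hw j).le
  refine ⟨hv0, ?_⟩
  have hne : v ≠ 0 := by
    intro h0
    have hww : w = 0 := by rw [← matApply_inv_right B hB w, ← hv, h0, matApply_zero]
    exact absurd (hw 0) (by rw [hww]; simp)
  rcases (Finset.sum_nonneg fun i _ => hv0 i).lt_or_eq with h | h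
  · exact h
  · exfalso
    apply hne
    ext i
    have := (Finset.sum_eq_zero_iff_of_nonneg (fun i _ => hv0 i)).mp h.symm i (Finset.mem_univ i)
    simpa using this

/-- Lemma (shape of the image of the tetrahedron under an affine map with nonnegative inverse). -/
theorem shape_lemma (B : Mat3) (hB : IsUnit B) (hBinv : ∀ i j, 0 ≤ B⁻¹ i j) (t : E3) :
    (∀ w : E3, (∀ i, 0 < w i) → ∃ c : ℝ, 0 < c ∧
      (matApply B 0 + t) + c • w ∈ (fun x => matApply B x + t) '' T0set) ∧
    (∀ Y : Submodule ℝ E3,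
      (∃ w : E3, (∀ i, 0 < w i) ∧ Y = (Submodule.span ℝ {w})ᗮ) →
      (Submodule.orthogonalProjectionOnto Y) '' ((fun x => matApply B x + t) '' Wset) =
        (Submodule.orthogonalProjectionOnto Y) '' ((fun x => matApply B x + t) '' T0set)) := by
  have hT0W : T0set ⊆ Wset := convexHull_mono (Set.subset_insert _ _)
  constructor
  · intro w hw
    obtain ⟨hv0, hS⟩ := v_facts B hB hBinv w hw
    set v := matApply B⁻¹ w with hv
    set S := ∑ i, v i with hSdef
    refine ⟨S⁻¹, inv_pos.mpr hS, S⁻¹ • v, ?_, ?_⟩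
    · apply mem_T0set
      · intro i
        have : (S⁻¹ • v) i = S⁻¹ * v i := by simp [PiLp.smul_apply]
        rw [this]
        exact mul_nonneg (inv_pos.mpr hS).le (hv0 i)
      · have : ∑ i, (S⁻¹ • v) i = S⁻¹ * S := by
          rw [Finset.mul_sum]; exact Finset.sum_congr rfl fun i _ => by simp [PiLp.smul_apply]
        rw [this, inv_mul_cancel₀ hS.ne']
    · show matApply B (S⁻¹ • v) + t = matApply B 0 + t + S⁻¹ • w
      rw [matApply_smul, matApply_zero, hv, matApply_inv_right B hB w]
      abel
  · rintro Y ⟨w, hw, hY⟩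
    have hwY : w ∈ Yᗮ := by
      rw [hY]
      exact Submodule.le_orthogonal_orthogonal (Submodule.span ℝ {w})
        (Submodule.mem_span_singleton_self w)
    have hproj : ∀ (a : E3) (c : ℝ),
        Submodule.orthogonalProjectionOnto Y (a + c • w) = Submodule.orthogonalProjectionOnto Y a := by
      intro a c
      rw [_root_.map_add, _root_.map_smul,
        Submodule.orthogonalProjectionOnto_apply_of_mem_orthogonal hwY, smul_zero, add_zero]
    apply Set.Subset.antisymm
    · rintro p ⟨q, ⟨x, hx, rfl⟩, rfl⟩
      obtain ⟨hx0, hxs⟩ := Wset_subset hx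
      obtain ⟨hv0, hS⟩ := v_facts B hB hBinv w hw
      set v := matApply B⁻¹ w with hv
      set S := ∑ i, v i with hSdef
      set c := (1 - ∑ i, x i) / S with hc
      have hc0 : 0 ≤ c := div_nonneg (by linarith) hS.le
      have hyT0 : x + c • v ∈ T0set := by
        apply mem_T0set
        · intro i
          have : (x + c • v) i = x i + c * v i := by simp [PiLp.add_apply, PiLp.smul_apply]
          rw [this]
          exact add_nonneg (hx0 i) (mul_nonneg hc0 (hv0 i))
        · have h1 : ∑ i, (x + c • v) i = (∑ i, x i) + c * S := by
            rw [hSdef, Finset.mul_sum, ← Finset.sum_add_distrib]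
            exact Finset.sum_congr rfl fun i _ => by simp [PiLp.add_apply, PiLp.smul_apply]
          rw [h1, hc, div_mul_cancel₀ _ hS.ne']
          ring
      refine ⟨matApply B (x + c • v) + t, ⟨x + c • v, hyT0, rfl⟩, ?_⟩
      have hG : matApply B (x + c • v) + t = (matApply B x + t) + c • w := by
        unfold matApply
        rw [_root_.map_add, _root_.map_smul]
        have : Matrix.toEuclideanCLM (𝕜 := ℝ) B v = w := by
          rw [hv]; exact matApply_inv_right B hB w
        rw [this]
        abel
      rw [hG, hproj]
    · exact Set.image_mono (Set.image_mono hT0W)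
end
end

section
/- There exists a constant C > 0 such that for every invertible 3×3 real matrix B all of whose inverse's entries are nonnegative, the 2-dimensional Hausdorff measure (area) of proj(B(T₀)) satisfies Area(proj(B(T₀))) ≥ C · α₁(B) · α₂(B), where B(T₀) = {Bx : x ∈ T₀}. -/
open Matrix MeasureTheory Filter
open scoped ENNReal

noncomputable section

/-! ### Auxiliary material for the proof -/

abbrev E2 : Type := EuclideanSpace ℝ (Fin 2)

noncomputable def psiMap : E3 →ₗ[ℝ] E2 where
  toFun x := (WithLp.equiv 2 (Fin 2 → ℝ)).symm
    ![(x 0 - x 1) / Real.sqrt 2, (x 0 + x 1 - 2 * x 2) / Real.sqrt 6]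
  map_add' x y := by
    ext i
    fin_cases i <;>
      simp [WithLp.equiv_symm_apply, PiLp.toLp_apply, PiLp.add_apply] <;> ring
  map_smul' c x := by
    ext i
    fin_cases i <;>
      simp [WithLp.equiv_symm_apply, PiLp.toLp_apply, PiLp.smul_apply, smul_eq_mul] <;> ring

lemma psiMap_apply0 (x : E3) : psiMap x 0 = (x 0 - x 1) / Real.sqrt 2 := rfl
lemma psiMap_apply1 (x : E3) : psiMap x 1 = (x 0 + x 1 - 2 * x 2) / Real.sqrt 6 := rfl

lemma psi_norm_le (x : E3) : ‖psiMap x‖ ≤ ‖x‖ := by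
  rw [EuclideanSpace.norm_eq, EuclideanSpace.norm_eq]
  apply Real.sqrt_le_sqrt
  rw [Fin.sum_univ_two, Fin.sum_univ_three]
  rw [psiMap_apply0, psiMap_apply1]
  have h2 : Real.sqrt 2 ^ 2 = 2 := Real.sq_sqrt (by norm_num)
  have h6 : Real.sqrt 6 ^ 2 = 6 := Real.sq_sqrt (by norm_num)
  simp only [Real.norm_eq_abs, sq_abs, div_pow, h2, h6]
  nlinarith [sq_nonneg (x 0 + x 1 + x 2)]

lemma psi_lip : LipschitzWith 1 psiMap := by
  apply LipschitzWith.of_dist_le_mul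
  intro x y
  rw [dist_eq_norm, dist_eq_norm, ← map_sub, NNReal.coe_one, one_mul]
  exact psi_norm_le (x - y)

lemma psi_projV (z : E3) : psiMap (projV z) = psiMap z := by
  have h1 : psiMap onesVec = 0 := by
    ext i
    fin_cases i <;>
      simp [psiMap, onesVec, WithLp.equiv_symm_apply, PiLp.toLp_apply] <;> norm_num
  unfold projV
  rw [map_sub, _root_.map_smul, h1, smul_zero, sub_zero]

lemma matApply_coord (A : Mat3) (x : E3) (i : Fin 3) :
    matApply A x i = ∑ j, A i j * x j := rfl

lemma volume_le_hausdorff {S : Set E2} (hS : MeasurableSet S) : volume S ≤ μH[2] S := by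
  have h1 : μH[2] ((WithLp.equiv 2 (Fin 2 → ℝ)) '' S) ≤ μH[2] S := by
    simpa using (PiLp.lipschitzWith_ofLp 2 (fun _ : Fin 2 => ℝ)).hausdorffMeasure_image_le
      (by norm_num : (0:ℝ) ≤ 2) S
  have h2 : (μH[2] : Measure (Fin 2 → ℝ)) = volume := by
    have := hausdorffMeasure_pi_real (ι := Fin 2)
    rwa [Fintype.card_fin, Nat.cast_two] at this
  have h3 : volume ((WithLp.equiv 2 (Fin 2 → ℝ)) '' S) = volume S := by
    have himg : (WithLp.equiv 2 (Fin 2 → ℝ)) '' S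
        = (MeasurableEquiv.toLp 2 (Fin 2 → ℝ)).symm.symm ⁻¹' S := by
      rw [MeasurableEquiv.symm_symm]
      exact (MeasurableEquiv.toLp 2 (Fin 2 → ℝ)).symm.toEquiv.image_eq_preimage_symm S
    rw [himg]
    exact ((EuclideanSpace.volume_preserving_symm_measurableEquiv_toLp (Fin 2)).symm).measure_preimage
      hS.nullMeasurableSet
  calc volume S = volume ((WithLp.equiv 2 (Fin 2 → ℝ)) '' S) := h3.symm
    _ = μH[2] ((WithLp.equiv 2 (Fin 2 → ℝ)) '' S) := by rw [h2]
    _ ≤ μH[2] S := h1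

lemma toEuclideanLin_coord (M : Matrix (Fin 2) (Fin 2) ℝ) (y : E2) (i : Fin 2) :
    Matrix.toEuclideanLin M y i = ∑ j, M i j * y j := rfl

lemma triangle_vol (w0 w1 w2 : E2) :
    ENNReal.ofReal (|(w1 0 - w0 0) * (w2 1 - w0 1) - (w2 0 - w0 0) * (w1 1 - w0 1)| / 4)
      ≤ volume (convexHull ℝ {w0, w1, w2}) := by
  set M2 : Matrix (Fin 2) (Fin 2) ℝ :=
    !![w1 0 - w0 0, w2 0 - w0 0; w1 1 - w0 1, w2 1 - w0 1] with hM2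
  set TL : E2 →ₗ[ℝ] E2 := Matrix.toEuclideanLin M2 with hTL
  set P : Set E2 := (MeasurableEquiv.toLp 2 (Fin 2 → ℝ)).symm ⁻¹'
    (Set.univ.pi fun _ => Set.Icc (0:ℝ) (1/2)) with hP
  have hPmem : ∀ y : E2, y ∈ P → (0 ≤ y 0 ∧ y 0 ≤ 1/2) ∧ (0 ≤ y 1 ∧ y 1 ≤ 1/2) := by
    intro y hy
    have h0 := hy 0 (Set.mem_univ _)
    have h1 := hy 1 (Set.mem_univ _)
    exact ⟨⟨h0.1, h0.2⟩, ⟨h1.1, h1.2⟩⟩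
  have hsub : (fun y => w0 + TL y) '' P ⊆ convexHull ℝ {w0, w1, w2} := by
    rintro _ ⟨y, hy, rfl⟩
    obtain ⟨⟨hy00, hy01⟩, ⟨hy10, hy11⟩⟩ := hPmem y hy
    have hmem : ∀ i : Fin 3, (![w0,w1,w2]) i ∈ convexHull ℝ ({w0,w1,w2} : Set E2) := by
      intro i
      apply subset_convexHull
      fin_cases i <;> simp
    have hw0 : ∀ i ∈ (Finset.univ : Finset (Fin 3)),
        (0:ℝ) ≤ ![1 - y 0 - y 1, y 0, y 1] i := by
      intro i _
      fin_cases i <;> simp <;> linarith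
    have hw1 : ∑ i : Fin 3, ![1 - y 0 - y 1, y 0, y 1] i = 1 := by
      simp [Fin.sum_univ_three]; ring
    have hsum := (convex_convexHull ℝ ({w0,w1,w2} : Set E2)).sum_mem hw0 hw1
      (fun i _ => hmem i)
    have hpt : ∑ i : Fin 3, (![1 - y 0 - y 1, y 0, y 1]) i • (![w0,w1,w2]) i = w0 + TL y := by
      rw [Fin.sum_univ_three]
      ext i
      fin_cases i <;>
        simp [PiLp.add_apply, PiLp.smul_apply, smul_eq_mul, hTL,
          toEuclideanLin_coord, Fin.sum_univ_two, hM2] <;> ring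
    rwa [hpt] at hsum
  have hdet : LinearMap.det TL = M2.det := by
    rw [hTL, Matrix.toEuclideanLin_eq_toLin, LinearMap.det_toLin]
  have hvol1 : volume ((fun y => w0 + TL y) '' P)
      = ENNReal.ofReal |M2.det| * volume P := by
    have : (fun y => w0 + TL y) '' P = (fun z => w0 + z) '' (TL '' P) := by
      rw [Set.image_image]
    rw [this, Set.image_add_left, measure_preimage_add, Measure.addHaar_image_linearMap, hdet]
  have hvolP : volume P = ENNReal.ofReal (1/4) := by
    rw [hP, (EuclideanSpace.volume_preserving_symm_measurableEquiv_toLp (Fin 2)).measure_preimage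
      (MeasurableSet.univ_pi (fun _ => measurableSet_Icc)).nullMeasurableSet,
      volume_pi_pi]
    simp only [Real.volume_Icc]
    norm_num
    rw [← ENNReal.ofReal_pow (by norm_num)]
    norm_num
  have hdet2 : M2.det = (w1 0 - w0 0) * (w2 1 - w0 1) - (w2 0 - w0 0) * (w1 1 - w0 1) := by
    rw [hM2, Matrix.det_fin_two_of]
  calc ENNReal.ofReal (|(w1 0 - w0 0) * (w2 1 - w0 1) - (w2 0 - w0 0) * (w1 1 - w0 1)| / 4)
      = ENNReal.ofReal |M2.det| * ENNReal.ofReal (1/4) := by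
        rw [← ENNReal.ofReal_mul (abs_nonneg _), hdet2]; ring_nf
    _ = volume ((fun y => w0 + TL y) '' P) := by rw [hvol1, hvolP]
    _ ≤ volume (convexHull ℝ {w0, w1, w2}) := measure_mono hsub

lemma opNorm_le_sum (M : Mat3) (h : ∀ i j, 0 ≤ M i j) :
    ‖Matrix.toEuclideanCLM (𝕜 := ℝ) M‖ ≤ ∑ i, ∑ j, M i j := by
  have hsum : (0:ℝ) ≤ ∑ i, ∑ j, M i j :=
    Finset.sum_nonneg fun i _ => Finset.sum_nonneg fun j _ => h i j
  apply ContinuousLinearMap.opNorm_le_bound _ hsum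
  intro x
  have hx : ∀ j, |x j| ≤ ‖x‖ := by
    intro j
    rw [EuclideanSpace.norm_eq, ← Real.sqrt_sq_eq_abs]
    apply Real.sqrt_le_sqrt
    simp only [Real.norm_eq_abs, sq_abs]
    exact Finset.single_le_sum (f := fun i => x i ^ 2) (fun i _ => sq_nonneg _)
      (Finset.mem_univ j)
  have hrow : ∀ i : Fin 3, |matApply M x i| ≤ (∑ j, M i j) * ‖x‖ := by
    intro i
    rw [matApply_coord]
    calc |∑ j, M i j * x j| ≤ ∑ j, |M i j * x j| := Finset.abs_sum_le_sum_abs _ _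
      _ ≤ ∑ j, M i j * ‖x‖ := Finset.sum_le_sum fun j _ => by
          rw [abs_mul, abs_of_nonneg (h i j)]
          exact mul_le_mul_of_nonneg_left (hx j) (h i j)
      _ = (∑ j, M i j) * ‖x‖ := by rw [Finset.sum_mul]
  have hmx : Matrix.toEuclideanCLM (𝕜 := ℝ) M x = matApply M x := rfl
  rw [hmx, EuclideanSpace.norm_eq,
    ← Real.sqrt_sq (mul_nonneg hsum (norm_nonneg x))]
  apply Real.sqrt_le_sqrt
  rw [Fin.sum_univ_three]
  have h0 := hrow 0
  have h1 := hrow 1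
  have h2 := hrow 2
  have r0 : (0:ℝ) ≤ ∑ j, M 0 j := Finset.sum_nonneg fun j _ => h 0 j
  have r1 : (0:ℝ) ≤ ∑ j, M 1 j := Finset.sum_nonneg fun j _ => h 1 j
  have r2 : (0:ℝ) ≤ ∑ j, M 2 j := Finset.sum_nonneg fun j _ => h 2 j
  rw [show ∑ i, ∑ j, M i j = (∑ j, M 0 j) + (∑ j, M 1 j) + (∑ j, M 2 j) from
    Fin.sum_univ_three _]
  simp only [Real.norm_eq_abs, sq_abs]
  nlinarith [mul_self_le_mul_self (abs_nonneg (matApply M x 0)) h0,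
    mul_self_le_mul_self (abs_nonneg (matApply M x 1)) h1,
    mul_self_le_mul_self (abs_nonneg (matApply M x 2)) h2,
    abs_mul_abs_self (matApply M x 0), abs_mul_abs_self (matApply M x 1),
    abs_mul_abs_self (matApply M x 2),
    mul_nonneg (mul_nonneg r0 r1) (sq_nonneg ‖x‖),
    mul_nonneg (mul_nonneg r0 r2) (sq_nonneg ‖x‖),
    mul_nonneg (mul_nonneg r1 r2) (sq_nonneg ‖x‖), sq_nonneg ‖x‖]


/-- Lemma (area of the projected triangle is comparable to `α₁ α₂`). -/
theorem area_proj_triangle_lower_bound :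
    ∃ C : ℝ, 0 < C ∧ ∀ B : Mat3, IsUnit B → (∀ i j, 0 ≤ B⁻¹ i j) →
      ENNReal.ofReal (C * sv1 B * sv2 B) ≤ μH[2] (projV '' (matApply B '' T0set)) := by
  refine ⟨(Real.sqrt 3 * 4)⁻¹, by positivity, ?_⟩
  intro B hB hBinv
  have hdetB : B.det ≠ 0 := by
    intro h
    have h1 := (Matrix.isUnit_iff_isUnit_det B).mp hB
    rw [h] at h1
    simpa using h1
  have hcol : ∀ (i k : Fin 3), matApply B (eVec i) k = B k i := by
    intro i k
    rw [matApply_coord]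
    simp [eVec, EuclideanSpace.single_apply]
  set w : Fin 3 → E2 := fun i => psiMap (matApply B (eVec i)) with hwdef
  have himg : psiMap '' (projV '' (matApply B '' T0set))
      = convexHull ℝ {w 0, w 1, w 2} := by
    rw [Set.image_image, Set.image_image]
    have hfun : (fun x => psiMap (projV (matApply B x)))
        = ⇑(psiMap ∘ₗ (Matrix.toEuclideanCLM (𝕜 := ℝ) B : E3 →L[ℝ] E3).toLinearMap) := by
      funext x
      simp only [LinearMap.comp_apply, ContinuousLinearMap.coe_coe]
      rw [psi_projV]
      rfl
    rw [hfun, T0set, LinearMap.image_convexHull]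
    congr 1
    rw [Set.image_insert_eq, Set.image_insert_eq, Set.image_singleton]
    rfl
  set S : ℝ := ∑ i, ∑ j, B⁻¹ i j with hSdef
  have hS0 : 0 ≤ S := Finset.sum_nonneg fun i _ => Finset.sum_nonneg fun j _ => hBinv i j
  set d : ℝ := (w 1 0 - w 0 0) * (w 2 1 - w 0 1) - (w 2 0 - w 0 0) * (w 1 1 - w 0 1) with hd
  have hsqrt2 : Real.sqrt 2 ≠ 0 := by positivity
  have hsqrt6 : Real.sqrt 6 ≠ 0 := by positivity
  have hsqrt3 : (0:ℝ) < Real.sqrt 3 := by positivity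
  have h26 : Real.sqrt 2 * Real.sqrt 6 = 2 * Real.sqrt 3 := by
    rw [← Real.sqrt_mul (by norm_num : (0:ℝ) ≤ 2),
      show (2:ℝ) * 6 = 2^2 * 3 by norm_num,
      Real.sqrt_mul (by positivity), Real.sqrt_sq (by norm_num)]
  have hwc0 : ∀ i, w i 0 = (B 0 i - B 1 i) / Real.sqrt 2 := by
    intro i
    show psiMap (matApply B (eVec i)) 0 = _
    rw [psiMap_apply0, hcol, hcol]
  have hwc1 : ∀ i, w i 1 = (B 0 i + B 1 i - 2 * B 2 i) / Real.sqrt 6 := by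
    intro i
    show psiMap (matApply B (eVec i)) 1 = _
    rw [psiMap_apply1, hcol, hcol, hcol]
  have hadj : d * (2 * Real.sqrt 3) = 2 * (∑ i, ∑ j, B.adjugate i j) := by
    rw [hd, hwc0 0, hwc0 1, hwc0 2, hwc1 0, hwc1 1, hwc1 2, ← h26,
      Matrix.adjugate_fin_three]
    simp only [Fin.sum_univ_three, Matrix.cons_val', Matrix.cons_val_zero,
      Matrix.cons_val_one, Matrix.head_cons, Matrix.empty_val',
      Matrix.cons_val_fin_one, Matrix.head_fin_const, Matrix.cons_val_two,
      Matrix.tail_cons, Matrix.of_apply]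
    field_simp
    ring
  have hdS : ∑ i, ∑ j, B.adjugate i j = B.det * S := by
    have hinv : ∀ i j, B⁻¹ i j = (B.det)⁻¹ * B.adjugate i j := by
      intro i j
      rw [Matrix.inv_def, Matrix.smul_apply, smul_eq_mul, Ring.inverse_eq_inv']
    rw [hSdef]
    simp_rw [hinv, ← Finset.mul_sum]
    rw [← mul_assoc, mul_inv_cancel₀ hdetB, one_mul]
  rw [hdS] at hadj
  have hdval : d = B.det * S / Real.sqrt 3 := by
    rw [eq_div_iff (ne_of_gt hsqrt3)]
    linear_combination hadj / 2
  have habsd : |d| = |B.det| * S / Real.sqrt 3 := by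
    rw [hdval, abs_div, abs_of_nonneg hsqrt3.le, abs_mul, abs_of_nonneg hS0]
  have hnormBinv_pos : 0 < ‖Matrix.toEuclideanCLM (𝕜 := ℝ) B⁻¹‖ := by
    rw [norm_pos_iff]
    intro h0
    have hz : (B⁻¹ : Mat3) = 0 := by
      rw [← (Matrix.toEuclideanCLM (𝕜 := ℝ) (n := Fin 3)).symm_apply_apply B⁻¹, h0, map_zero]
    have hunit : B * B⁻¹ = 1 := Matrix.mul_nonsing_inv B (isUnit_iff_ne_zero.mpr hdetB)
    rw [hz, mul_zero] at hunit
    exact one_ne_zero hunit.symm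
  have hsv1_pos : 0 < sv1 B := by
    rw [sv1, norm_pos_iff]
    intro h0
    apply hB.ne_zero
    rw [← (Matrix.toEuclideanCLM (𝕜 := ℝ) (n := Fin 3)).symm_apply_apply B, h0, map_zero]
  have hsv12 : sv1 B * sv2 B = |B.det| * ‖Matrix.toEuclideanCLM (𝕜 := ℝ) B⁻¹‖ := by
    rw [sv2, sv3]
    rw [sv1] at hsv1_pos ⊢
    field_simp
  have hns : ‖Matrix.toEuclideanCLM (𝕜 := ℝ) B⁻¹‖ ≤ S := opNorm_le_sum _ hBinv
  have hreal : (Real.sqrt 3 * 4)⁻¹ * sv1 B * sv2 B ≤ |d| / 4 := by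
    rw [mul_assoc, hsv12, habsd]
    have h1 : (Real.sqrt 3 * 4)⁻¹ * (|B.det| * ‖Matrix.toEuclideanCLM (𝕜 := ℝ) B⁻¹‖)
        ≤ (Real.sqrt 3 * 4)⁻¹ * (|B.det| * S) := by
      apply mul_le_mul_of_nonneg_left _ (by positivity)
      exact mul_le_mul_of_nonneg_left hns (abs_nonneg _)
    refine h1.trans_eq ?_
    field_simp
  have hμ1 : μH[2] (psiMap '' (projV '' (matApply B '' T0set)))
      ≤ μH[2] (projV '' (matApply B '' T0set)) := by
    simpa using psi_lip.hausdorffMeasure_image_le (by norm_num : (0:ℝ) ≤ 2) _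
  have hmeas : MeasurableSet (convexHull ℝ ({w 0, w 1, w 2} : Set E2)) :=
    ((Set.toFinite _).isCompact_convexHull ℝ).measurableSet
  calc ENNReal.ofReal ((Real.sqrt 3 * 4)⁻¹ * sv1 B * sv2 B)
      ≤ ENNReal.ofReal (|d| / 4) := ENNReal.ofReal_le_ofReal hreal
    _ ≤ volume (convexHull ℝ {w 0, w 1, w 2}) := triangle_vol _ _ _
    _ ≤ μH[2] (convexHull ℝ {w 0, w 1, w 2}) := volume_le_hausdorff hmeas
    _ = μH[2] (psiMap '' (projV '' (matApply B '' T0set))) := by rw [himg]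
    _ ≤ _ := hμ1

end
end

section
/- There exists a constant C > 0 such that for every invertible 3×3 real matrix B all of whose inverse's entries are nonnegative, there exists i ∈ {2,3} with ‖proj(B(e_i − e₁))‖ ≥ C · α₁(B). -/
open Matrix MeasureTheory Filter
open scoped ENNReal

noncomputable section

/-- auxiliary: a coordinate is bounded by the Euclidean norm. -/
lemma E3_coord_le_norm (x : E3) (k : Fin 3) : |x k| ≤ ‖x‖ := by
  rw [EuclideanSpace.norm_eq]
  rw [show |x k| = Real.sqrt (|x k| ^ 2) by rw [Real.sqrt_sq_eq_abs, abs_abs]]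
  apply Real.sqrt_le_sqrt
  fin_cases k <;> simp [Fin.sum_univ_three] <;>
    nlinarith [sq_nonneg (x 0), sq_nonneg (x 1), sq_nonneg (x 2),
      sq_abs (x 0), sq_abs (x 1), sq_abs (x 2)]

/-- auxiliary: the Euclidean norm is bounded by the sum of coordinate absolute values. -/
lemma E3_norm_le_sum (x : E3) : ‖x‖ ≤ |x 0| + |x 1| + |x 2| := by
  rw [EuclideanSpace.norm_eq]
  rw [show |x 0| + |x 1| + |x 2| = Real.sqrt ((|x 0| + |x 1| + |x 2|) ^ 2) by
    rw [Real.sqrt_sq (by positivity)]]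
  apply Real.sqrt_le_sqrt
  simp only [Real.norm_eq_abs, Fin.sum_univ_three]
  nlinarith [abs_nonneg (x 0), abs_nonneg (x 1), abs_nonneg (x 2),
    sq_abs (x 0), sq_abs (x 1), sq_abs (x 2)]

/-- auxiliary: coordinates of the action of a matrix on `E3`. -/
lemma toECLM_coord (M : Mat3) (x : E3) (k : Fin 3) :
    (Matrix.toEuclideanCLM (𝕜 := ℝ) M x) k = M k 0 * x 0 + M k 1 * x 1 + M k 2 * x 2 := by
  have h := congrFun (Matrix.ofLp_toEuclideanCLM (𝕜 := ℝ) M x) k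
  simpa [Matrix.toLin'_apply, Matrix.mulVec, dotProduct, Fin.sum_univ_three] using h

lemma onesVec_coord (k : Fin 3) : onesVec k = 1 := by
  fin_cases k <;> rfl

/-- auxiliary: coordinates of `projV`. -/
lemma projV_coord (y : E3) (k : Fin 3) :
    projV y k = y k - ((y 0 + y 1 + y 2) / 3) := by
  have : projV y k = y k - ((y 0 + y 1 + y 2) / 3) * onesVec k := by
    simp [projV]
  rw [this, onesVec_coord]; ring

lemma core_entry_bound (b a : Mat3) (t₁ t₂ d : ℝ)
    (ha : ∀ i j, 0 ≤ a i j)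
    (hAB : a * b = 1) (hBA : b * a = 1) (hd : 0 ≤ d)
    (h1 : ∀ k, |b k 1 - b k 0 - t₁| ≤ d)
    (h2 : ∀ k, |b k 2 - b k 0 - t₂| ≤ d) :
    ∀ k i, |b k i| ≤ 4 * d := by
  have E : ∀ k l : Fin 3, a k 0 * b 0 l + a k 1 * b 1 l + a k 2 * b 2 l
      = if k = l then 1 else 0 := by
    intro k l
    have := congrFun (congrFun hAB k) l
    simpa [Matrix.mul_apply, Fin.sum_univ_three, Matrix.one_apply] using this
  have F : ∀ k l : Fin 3, b k 0 * a 0 l + b k 1 * a 1 l + b k 2 * a 2 l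
      = if k = l then 1 else 0 := by
    intro k l
    have := congrFun (congrFun hBA k) l
    simpa [Matrix.mul_apply, Fin.sum_univ_three, Matrix.one_apply] using this
  have hr1 := fun k => abs_le.mp (h1 k)
  have hr2 := fun k => abs_le.mp (h2 k)
  -- column sums of a are positive
  have hS : ∀ j : Fin 3, 0 < a 0 j + a 1 j + a 2 j := by
    intro j
    rcases lt_or_ge 0 (a 0 j + a 1 j + a 2 j) with h | h
    · exact h
    · exfalso
      have h0 : a 0 j = 0 := le_antisymm (by linarith [ha 0 j, ha 1 j, ha 2 j]) (ha 0 j)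
      have h1' : a 1 j = 0 := le_antisymm (by linarith [ha 0 j, ha 1 j, ha 2 j]) (ha 1 j)
      have h2' : a 2 j = 0 := le_antisymm (by linarith [ha 0 j, ha 1 j, ha 2 j]) (ha 2 j)
      have := F j j
      rw [if_pos rfl, h0, h1', h2'] at this
      norm_num at this
  have hSpos : 0 < a 0 0 + a 1 0 + a 2 0 + (a 0 1 + a 1 1 + a 2 1) + (a 0 2 + a 1 2 + a 2 2) := by
    linarith [hS 0, hS 1, hS 2]
  -- |t| ≤ d for both t₁ (l = 1) and t₂ (l = 2)
  have ht : ∀ (l : Fin 3) (t : ℝ), l ≠ 0 →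
      (∀ k, -d ≤ b k l - b k 0 - t ∧ b k l - b k 0 - t ≤ d) → |t| ≤ d := by
    intro l t hl hr
    have hR : (if (0:Fin 3) = l then (1:ℝ) else 0) + (if (1:Fin 3) = l then (1:ℝ) else 0)
          + (if (2:Fin 3) = l then (1:ℝ) else 0) - 1 = 0 := by
      fin_cases l <;> simp_all
    have G : t * (a 0 0 + a 1 0 + a 2 0 + (a 0 1 + a 1 1 + a 2 1) + (a 0 2 + a 1 2 + a 2 2))
        + (a 0 0 * (b 0 l - b 0 0 - t) + a 1 0 * (b 0 l - b 0 0 - t) + a 2 0 * (b 0 l - b 0 0 - t)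
         + a 0 1 * (b 1 l - b 1 0 - t) + a 1 1 * (b 1 l - b 1 0 - t) + a 2 1 * (b 1 l - b 1 0 - t)
         + a 0 2 * (b 2 l - b 2 0 - t) + a 1 2 * (b 2 l - b 2 0 - t) + a 2 2 * (b 2 l - b 2 0 - t))
        = 0 := by
      have e00 : a 0 0 * b 0 0 + a 0 1 * b 1 0 + a 0 2 * b 2 0 = 1 := by simpa using E 0 0
      have e10 : a 1 0 * b 0 0 + a 1 1 * b 1 0 + a 1 2 * b 2 0 = 0 := by simpa using E 1 0
      have e20 : a 2 0 * b 0 0 + a 2 1 * b 1 0 + a 2 2 * b 2 0 = 0 := by simpa using E 2 0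
      linear_combination E 0 l + E 1 l + E 2 l - e00 - e10 - e20 + hR
    have bUp : ∀ k j : Fin 3, a k j * (b j l - b j 0 - t) ≤ a k j * d :=
      fun k j => mul_le_mul_of_nonneg_left (hr j).2 (ha k j)
    have bLo : ∀ k j : Fin 3, a k j * (-d) ≤ a k j * (b j l - b j 0 - t) :=
      fun k j => mul_le_mul_of_nonneg_left (hr j).1 (ha k j)
    rw [abs_le]
    constructor
    · have hup : (-t) * (a 0 0 + a 1 0 + a 2 0 + (a 0 1 + a 1 1 + a 2 1) + (a 0 2 + a 1 2 + a 2 2))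
          ≤ d * (a 0 0 + a 1 0 + a 2 0 + (a 0 1 + a 1 1 + a 2 1) + (a 0 2 + a 1 2 + a 2 2)) := by
        nlinarith [G, bUp 0 0, bUp 0 1, bUp 0 2, bUp 1 0, bUp 1 1, bUp 1 2,
          bUp 2 0, bUp 2 1, bUp 2 2]
      have := (mul_le_mul_iff_left₀ hSpos).mp hup
      linarith
    · have hup : t * (a 0 0 + a 1 0 + a 2 0 + (a 0 1 + a 1 1 + a 2 1) + (a 0 2 + a 1 2 + a 2 2))
          ≤ d * (a 0 0 + a 1 0 + a 2 0 + (a 0 1 + a 1 1 + a 2 1) + (a 0 2 + a 1 2 + a 2 2)) := by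
        nlinarith [G, bLo 0 0, bLo 0 1, bLo 0 2, bLo 1 0, bLo 1 1, bLo 1 2,
          bLo 2 0, bLo 2 1, bLo 2 2]
      exact (mul_le_mul_iff_left₀ hSpos).mp hup
  have ht1 : |t₁| ≤ d := ht 1 t₁ (by decide) hr1
  have ht2 : |t₂| ≤ d := ht 2 t₂ (by decide) hr2
  have ht1' := abs_le.mp ht1
  have ht2' := abs_le.mp ht2
  -- |b k 0| ≤ 2d
  have hb0 : ∀ k j : Fin 3, k ≠ j → |b k 0| ≤ 2 * d := by
    intro k j hkj
    have Fkj := F k j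
    rw [if_neg hkj] at Fkj
    have hSj := hS j
    have id1 : b k 0 * (a 0 j + a 1 j + a 2 j)
        = -(a 1 j * t₁ + a 1 j * (b k 1 - b k 0 - t₁) + a 2 j * t₂ + a 2 j * (b k 2 - b k 0 - t₂)) := by
      linear_combination Fkj
    have u1 : a 1 j * t₁ ≤ a 1 j * d := mul_le_mul_of_nonneg_left ht1'.2 (ha 1 j)
    have u2 : a 1 j * (-d) ≤ a 1 j * t₁ := mul_le_mul_of_nonneg_left ht1'.1 (ha 1 j)
    have u3 : a 2 j * t₂ ≤ a 2 j * d := mul_le_mul_of_nonneg_left ht2'.2 (ha 2 j)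
    have u4 : a 2 j * (-d) ≤ a 2 j * t₂ := mul_le_mul_of_nonneg_left ht2'.1 (ha 2 j)
    have u5 : a 1 j * (b k 1 - b k 0 - t₁) ≤ a 1 j * d := mul_le_mul_of_nonneg_left (hr1 k).2 (ha 1 j)
    have u6 : a 1 j * (-d) ≤ a 1 j * (b k 1 - b k 0 - t₁) := mul_le_mul_of_nonneg_left (hr1 k).1 (ha 1 j)
    have u7 : a 2 j * (b k 2 - b k 0 - t₂) ≤ a 2 j * d := mul_le_mul_of_nonneg_left (hr2 k).2 (ha 2 j)
    have u8 : a 2 j * (-d) ≤ a 2 j * (b k 2 - b k 0 - t₂) := mul_le_mul_of_nonneg_left (hr2 k).1 (ha 2 j)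
    have w0 : 0 ≤ a 0 j * d := mul_nonneg (ha 0 j) hd
    rw [abs_le]
    constructor
    · have hup : (-(b k 0)) * (a 0 j + a 1 j + a 2 j) ≤ (2 * d) * (a 0 j + a 1 j + a 2 j) := by
        nlinarith [id1]
      have := (mul_le_mul_iff_left₀ hSj).mp hup
      linarith
    · have hup : b k 0 * (a 0 j + a 1 j + a 2 j) ≤ (2 * d) * (a 0 j + a 1 j + a 2 j) := by
        nlinarith [id1]
      exact (mul_le_mul_iff_left₀ hSj).mp hup
  have hb0' : ∀ k : Fin 3, |b k 0| ≤ 2 * d := by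
    intro k
    fin_cases k
    · exact hb0 0 1 (by decide)
    · exact hb0 1 0 (by decide)
    · exact hb0 2 0 (by decide)
  have H0 : ∀ k, |b k 0| ≤ 4 * d := by
    intro k
    have hk0 := abs_le.mp (hb0' k)
    rw [abs_le]; constructor <;> linarith
  have H1 : ∀ k, |b k 1| ≤ 4 * d := by
    intro k
    have hk0 := abs_le.mp (hb0' k)
    rw [abs_le]; constructor <;> linarith [(hr1 k).1, (hr1 k).2]
  have H2 : ∀ k, |b k 2| ≤ 4 * d := by
    intro k
    have hk0 := abs_le.mp (hb0' k)
    rw [abs_le]; constructor <;> linarith [(hr2 k).1, (hr2 k).2]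
  intro k i
  fin_cases i
  exacts [H0 k, H1 k, H2 k]

/-- Lemma (a projected edge image is comparable to `α₁`). -/
theorem proj_edge_length_lower_bound :
    ∃ C : ℝ, 0 < C ∧ ∀ B : Mat3, IsUnit B → (∀ i j, 0 ≤ B⁻¹ i j) →
      ∃ i : Fin 3, (i = 1 ∨ i = 2) ∧
        C * sv1 B ≤ ‖projV (matApply B (eVec i - eVec 0))‖ := by
  refine ⟨1/36, by norm_num, ?_⟩
  intro B hu hinv
  have hdet : IsUnit B.det := (Matrix.isUnit_iff_isUnit_det B).mp hu
  have hAB : B⁻¹ * B = 1 := Matrix.nonsing_inv_mul B hdet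
  have hBA : B * B⁻¹ = 1 := Matrix.mul_nonsing_inv B hdet
  set t₁ : ℝ := ((B 0 1 - B 0 0) + (B 1 1 - B 1 0) + (B 2 1 - B 2 0)) / 3 with ht₁def
  set t₂ : ℝ := ((B 0 2 - B 0 0) + (B 1 2 - B 1 0) + (B 2 2 - B 2 0)) / 3 with ht₂def
  -- coordinates of the two edge images
  have hx1 : ∀ k : Fin 3, (matApply B (eVec 1 - eVec 0)) k = B k 1 - B k 0 := by
    intro k
    simp only [matApply]
    rw [toECLM_coord]
    simp [eVec, EuclideanSpace.single_apply]
    ring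
  have hx2 : ∀ k : Fin 3, (matApply B (eVec 2 - eVec 0)) k = B k 2 - B k 0 := by
    intro k
    simp only [matApply]
    rw [toECLM_coord]
    simp [eVec, EuclideanSpace.single_apply]
    ring
  have hc1 : ∀ k : Fin 3, (projV (matApply B (eVec 1 - eVec 0))) k = B k 1 - B k 0 - t₁ := by
    intro k
    rw [projV_coord, hx1 0, hx1 1, hx1 2, hx1 k, ht₁def]
  have hc2 : ∀ k : Fin 3, (projV (matApply B (eVec 2 - eVec 0))) k = B k 2 - B k 0 - t₂ := by
    intro k
    rw [projV_coord, hx2 0, hx2 1, hx2 2, hx2 k, ht₂def]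
  set d : ℝ := max ‖projV (matApply B (eVec 1 - eVec 0))‖
      ‖projV (matApply B (eVec 2 - eVec 0))‖ with hddef
  have hd : 0 ≤ d := le_trans (norm_nonneg _) (le_max_left _ _)
  have h1 : ∀ k : Fin 3, |B k 1 - B k 0 - t₁| ≤ d := by
    intro k
    rw [← hc1 k]
    exact le_trans (E3_coord_le_norm _ k) (le_max_left _ _)
  have h2 : ∀ k : Fin 3, |B k 2 - B k 0 - t₂| ≤ d := by
    intro k
    rw [← hc2 k]
    exact le_trans (E3_coord_le_norm _ k) (le_max_right _ _)
  have hent : ∀ k i, |B k i| ≤ 4 * d :=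
    core_entry_bound B B⁻¹ t₁ t₂ d hinv hAB hBA hd h1 h2
  -- operator norm bound
  have hop : sv1 B ≤ 36 * d := by
    have : ‖Matrix.toEuclideanCLM (𝕜 := ℝ) B‖ ≤ 36 * d := by
      refine ContinuousLinearMap.opNorm_le_bound _ (by positivity) ?_
      intro x
      have hxc : ∀ i : Fin 3, |x i| ≤ ‖x‖ := fun i => E3_coord_le_norm x i
      have hkey : ∀ k : Fin 3, |(Matrix.toEuclideanCLM (𝕜 := ℝ) B x) k| ≤ 12 * d * ‖x‖ := by
        intro k
        rw [toECLM_coord]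
        have e0 : |B k 0 * x 0| ≤ 4 * d * ‖x‖ := by
          rw [abs_mul]
          exact mul_le_mul (hent k 0) (hxc 0) (abs_nonneg _) (by positivity)
        have e1 : |B k 1 * x 1| ≤ 4 * d * ‖x‖ := by
          rw [abs_mul]
          exact mul_le_mul (hent k 1) (hxc 1) (abs_nonneg _) (by positivity)
        have e2 : |B k 2 * x 2| ≤ 4 * d * ‖x‖ := by
          rw [abs_mul]
          exact mul_le_mul (hent k 2) (hxc 2) (abs_nonneg _) (by positivity)
        calc |B k 0 * x 0 + B k 1 * x 1 + B k 2 * x 2|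
            ≤ |B k 0 * x 0| + |B k 1 * x 1| + |B k 2 * x 2| := abs_add_three _ _ _
          _ ≤ 12 * d * ‖x‖ := by linarith
      calc ‖Matrix.toEuclideanCLM (𝕜 := ℝ) B x‖
          ≤ |(Matrix.toEuclideanCLM (𝕜 := ℝ) B x) 0| + |(Matrix.toEuclideanCLM (𝕜 := ℝ) B x) 1|
            + |(Matrix.toEuclideanCLM (𝕜 := ℝ) B x) 2| := E3_norm_le_sum _
        _ ≤ 36 * d * ‖x‖ := by linarith [hkey 0, hkey 1, hkey 2]
    simpa [sv1] using this
  rcases le_total ‖projV (matApply B (eVec 1 - eVec 0))‖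
      ‖projV (matApply B (eVec 2 - eVec 0))‖ with h | h
  · refine ⟨2, Or.inr rfl, ?_⟩
    have hdd : d = ‖projV (matApply B (eVec 2 - eVec 0))‖ := max_eq_right h
    rw [hdd] at hop
    linarith
  · refine ⟨1, Or.inl rfl, ?_⟩
    have hdd : d = ‖projV (matApply B (eVec 1 - eVec 0))‖ := max_eq_left h
    rw [hdd] at hop
    linarith
end
end
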